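/- For every real number β with β > 1/2, the polynomial q_β has three distinct real roots located as follows: there exist real numbers λ₁, λ₂, λ₃ with λ₁ < −1/2, 1/2 < λ₂ < 2β, and λ₃ > 2β, such that q_β(λ₁) = q_β(λ₂) = q_β(λ₃) = 0. -/
import Mathlib

theorem q_beta_three_roots_pos (β : ℝ) (hβ : 1/2 < β) :
    ∃ l₁ l₂ l₃ : ℝ, l₁ < -(1/2) ∧ 1/2 < l₂ ∧ l₂ < 2*β ∧ 2*β < l₃ ∧
      l₁^3 - 3 * β * l₁^2 + β = 0 ∧
      l₂^3 - 3 * β * l₂^2 + β = 0 ∧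
      l₃^3 - 3 * β * l₃^2 + β = 0 := by
  set f : ℝ → ℝ := fun x => x^3 - 3*β*x^2 + β with hf
  have hcont : Continuous f := by fun_prop
  have h1 : ∃ x ∈ Set.Ioo (-1:ℝ) (-(1/2)), f x = 0 := by
    have hsub := intermediate_value_Ioo (by norm_num : (-1:ℝ) ≤ -(1/2)) hcont.continuousOn
    have h0 : (0:ℝ) ∈ Set.Ioo (f (-1)) (f (-(1/2))) := by
      constructor <;> simp only [hf] <;> nlinarith
    obtain ⟨x, hx, hfx⟩ := hsub h0
    exact ⟨x, hx, hfx⟩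
  have h2 : ∃ x ∈ Set.Ioo (1/2:ℝ) (2*β), f x = 0 := by
    have hsub := intermediate_value_Ioo' (by linarith : (1/2:ℝ) ≤ 2*β) hcont.continuousOn
    have h0 : (0:ℝ) ∈ Set.Ioo (f (2*β)) (f (1/2)) := by
      constructor <;> simp only [hf] <;> nlinarith
    obtain ⟨x, hx, hfx⟩ := hsub h0
    exact ⟨x, hx, hfx⟩
  have h3 : ∃ x ∈ Set.Ioo (2*β) (3*β+1), f x = 0 := by
    have hsub := intermediate_value_Ioo (by linarith : (2*β:ℝ) ≤ 3*β+1) hcont.continuousOn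
    have h0 : (0:ℝ) ∈ Set.Ioo (f (2*β)) (f (3*β+1)) := by
      constructor <;> simp only [hf] <;> nlinarith
    obtain ⟨x, hx, hfx⟩ := hsub h0
    exact ⟨x, hx, hfx⟩
  obtain ⟨l₁, ⟨_, h1b⟩, hfe1⟩ := h1
  obtain ⟨l₂, ⟨h2a, h2b⟩, hfe2⟩ := h2
  obtain ⟨l₃, ⟨h3a, _⟩, hfe3⟩ := h3
  exact ⟨l₁, l₂, l₃, h1b, h2a, h2b, h3a, hfe1, hfe2, hfe3⟩
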